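/- Let b : ℝ^d → ℝ be C¹, and suppose x : [0,1] → ℝ^d solves x'(t) = u(t) with ∇b(x(t))ᵀu(t) + ε·sgn(b(x(t)) - δ)|b(x(t)) - δ|^ρ + w(t)·r(t) ≥ 0, where w : [0,1] → ℝ≥0 is monotonically decreasing with w(t) = 0 for all t ∈ [t_w, 1], r(t) ≥ 0, ε > 0, ρ ∈ (0,1), δ > 0, t_w ∈ [0,1). If b(x(t₀)) ≥ δ for some t₀ ≥ t_w, then b(x(t)) ≥ δ for all t ∈ [t₀, 1]. -/

import Mathlib

open scoped RealInnerProductSpace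

theorem stmt18 (d : ℕ) (b : EuclideanSpace ℝ (Fin d) → ℝ) (hb : ContDiff ℝ 1 b)
    (x : ℝ → EuclideanSpace ℝ (Fin d)) (u : ℝ → EuclideanSpace ℝ (Fin d))
    (w r : ℝ → ℝ) (ε ρ δ tw t₀ : ℝ)
    (hε : 0 < ε) (hρ0 : 0 < ρ) (hρ1 : ρ < 1) (hδ : 0 < δ) (htw : tw ∈ Set.Ico (0:ℝ) 1)
    (hwpos : ∀ t, 0 ≤ w t) (hwmono : ∀ s t, s ≤ t → w t ≤ w s)
    (hwzero : ∀ t ∈ Set.Icc tw (1:ℝ), w t = 0)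
    (hrpos : ∀ t, 0 ≤ r t)
    (hx : ∀ t ∈ Set.Icc (0:ℝ) 1, HasDerivAt x (u t) t)
    (hcbf : ∀ t ∈ Set.Icc (0:ℝ) 1,
      ⟪gradient b (x t), u t⟫ + ε * Real.sign (b (x t) - δ) * |b (x t) - δ| ^ ρ
        + w t * r t ≥ 0)
    (ht₀ : tw ≤ t₀) (ht₀1 : t₀ ≤ 1)
    (h0 : b (x t₀) ≥ δ) :
    ∀ t ∈ Set.Icc t₀ (1:ℝ), b (x t) ≥ δ := by
  have htw0 : (0:ℝ) ≤ tw := htw.1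
  have ht₀0 : (0:ℝ) ≤ t₀ := le_trans htw0 ht₀
  -- derivative of h := b ∘ x
  set h : ℝ → ℝ := fun t => b (x t) with hh
  have hderiv : ∀ t ∈ Set.Icc (0:ℝ) 1,
      HasDerivAt h (⟪gradient b (x t), u t⟫) t := by
    intro t ht
    have hdb : DifferentiableAt ℝ b (x t) := (hb.differentiable one_ne_zero) (x t)
    have hg := hdb.hasGradientAt
    rw [hasGradientAt_iff_hasFDerivAt] at hg
    have := hg.comp_hasDerivAt t (hx t ht)
    simpa [InnerProductSpace.toDual_apply_apply, hh, Function.comp_def] using this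
  have hcont : ContinuousOn h (Set.Icc (0:ℝ) 1) := fun t ht =>
    ((hderiv t ht).continuousAt).continuousWithinAt
  intro t₁ ht₁
  obtain ⟨ht₁l, ht₁r⟩ := ht₁
  by_contra hneg
  push_neg at hneg
  -- the set of times in [t₀, t₁] where h ≥ δ
  set S : Set ℝ := Set.Icc t₀ t₁ ∩ h ⁻¹' Set.Ici δ with hS
  have hsub : Set.Icc t₀ t₁ ⊆ Set.Icc (0:ℝ) 1 :=
    Set.Icc_subset_Icc ht₀0 ht₁r
  have hScl : IsClosed S :=
    (hcont.mono hsub).preimage_isClosed_of_isClosed isClosed_Icc isClosed_Ici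
  have hSne : S.Nonempty := ⟨t₀, ⟨le_rfl, ht₁l⟩, h0⟩
  have hSbdd : BddAbove S := ⟨t₁, fun y hy => hy.1.2⟩
  set s := sSup S with hs
  have hsS : s ∈ S := hScl.csSup_mem hSne hSbdd
  have hst₁ : s ≤ t₁ := hsS.1.2
  have hst₀ : t₀ ≤ s := hsS.1.1
  have hhs : δ ≤ h s := hsS.2
  have hslt : s < t₁ := lt_of_le_of_ne hst₁ (fun he => absurd hhs (by rw [he]; exact not_le.mpr hneg))
  -- on (s, t₁], h < δ
  have hlt : ∀ t ∈ Set.Ioc s t₁, h t < δ := by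
    intro t ht
    by_contra hge
    push_neg at hge
    have : t ∈ S := ⟨⟨le_trans hst₀ ht.1.le, ht.2⟩, hge⟩
    exact absurd (le_csSup hSbdd this) (not_le.mpr ht.1)
  -- h is monotone on [s, t₁]
  have hmono : MonotoneOn h (Set.Icc s t₁) := by
    have hsub2 : Set.Icc s t₁ ⊆ Set.Icc (0:ℝ) 1 :=
      Set.Icc_subset_Icc (le_trans ht₀0 hst₀) ht₁r
    apply monotoneOn_of_deriv_nonneg (convex_Icc s t₁) (hcont.mono hsub2)
    · intro t ht
      rw [interior_Icc] at ht
      exact ((hderiv t (hsub2 (Set.Ioo_subset_Icc_self ht))).differentiableAt).differentiableWithinAt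
    · intro t ht
      rw [interior_Icc] at ht
      have ht01 : t ∈ Set.Icc (0:ℝ) 1 := hsub2 (Set.Ioo_subset_Icc_self ht)
      rw [(hderiv t ht01).deriv]
      have hneg' : h t - δ < 0 := sub_neg.mpr (hlt t ⟨ht.1, ht.2.le⟩)
      have hwz : w t = 0 := hwzero t ⟨le_trans ht₀ (le_trans hst₀ ht.1.le), ht01.2⟩
      have hc := hcbf t ht01
      rw [hwz, Real.sign_of_neg hneg'] at hc
      nlinarith [Real.rpow_nonneg (abs_nonneg (b (x t) - δ)) ρ, hc,
        mul_nonneg hε.le (Real.rpow_nonneg (abs_nonneg (b (x t) - δ)) ρ)]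
  have := hmono (Set.left_mem_Icc.mpr hst₁) (Set.right_mem_Icc.mpr hst₁) hst₁
  exact absurd (le_trans hhs this) (not_le.mpr hneg)
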